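/- Let p ≥ 0 be a real number and let F : Γ → ℂ satisfy ∑_{σ ∈ Γ} λ_σ^{-2p} |F(σ)|² < ∞. Then the p-variance satisfies Var_p(F) = ∑_{σ ∈ Γ} λ_σ^{-2p} |F(σ) − (𝔈F)(σ)|² ≤ ∑_{k=0}^{∞} ( ∑_{σ ∈ Γ} λ_σ^{-2p} |(𝔞_k†(𝔞_k F))(σ)|² ), where the inequality is understood in the extended nonnegative reals (the right-hand side may be +∞). -/

import Mathlib

open scoped BigOperators

/-- `λ_σ = ∏_{k ∈ σ} (k+1)`, with `λ_∅ = 1`. -/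
noncomputable def lam (σ : Finset ℕ) : ℝ := ∏ k ∈ σ, ((k : ℝ) + 1)

/-- The annihilation operator: `(𝔞_k F)(σ) = F(σ ∪ {k})` if `k ∉ σ`, else `0`. -/
def ann (k : ℕ) (F : Finset ℕ → ℂ) : Finset ℕ → ℂ :=
  fun σ => if k ∈ σ then 0 else F (insert k σ)

/-- The creation operator: `(𝔞_k† F)(σ) = F(σ \ {k})` if `k ∈ σ`, else `0`. -/
def cre (k : ℕ) (F : Finset ℕ → ℂ) : Finset ℕ → ℂ :=
  fun σ => if k ∈ σ then F (σ.erase k) else 0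

/-- The expectation operator: `(𝔈 F)(σ) = F(∅)` if `σ = ∅`, else `0`. -/
def expec (F : Finset ℕ → ℂ) : Finset ℕ → ℂ :=
  fun σ => if σ = ∅ then F ∅ else 0

/-- The variance bound `Var_p(F) ≤ ∑_{k=0}^∞ ‖𝔞_k† 𝔞_k F‖_{-p}²`, understood in the
extended nonnegative reals. -/
theorem stmt14 (p : ℝ) (hp : 0 ≤ p) (F : Finset ℕ → ℂ)
    (hF : Summable (fun σ : Finset ℕ => lam σ ^ (-(2 * p)) * ‖F σ‖ ^ 2)) :
    ∑' σ : Finset ℕ,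
        ENNReal.ofReal (lam σ ^ (-(2 * p)) * ‖F σ - expec F σ‖ ^ 2)
      ≤ ∑' k : ℕ, ∑' σ : Finset ℕ,
          ENNReal.ofReal (lam σ ^ (-(2 * p)) * ‖cre k (ann k F) σ‖ ^ 2) := by
  rw [ENNReal.tsum_comm]
  refine ENNReal.tsum_le_tsum fun σ => ?_
  have hterm : ∀ k : ℕ,
      ENNReal.ofReal (lam σ ^ (-(2 * p)) * ‖cre k (ann k F) σ‖ ^ 2)
        = if k ∈ σ then ENNReal.ofReal (lam σ ^ (-(2 * p)) * ‖F σ‖ ^ 2) else 0 := by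
    intro k
    by_cases hk : k ∈ σ
    · simp [cre, ann, hk, Finset.insert_erase, Finset.notMem_erase]
    · simp [cre, hk]
  have hsum : (∑' k : ℕ,
      ENNReal.ofReal (lam σ ^ (-(2 * p)) * ‖cre k (ann k F) σ‖ ^ 2))
      = σ.card • ENNReal.ofReal (lam σ ^ (-(2 * p)) * ‖F σ‖ ^ 2) := by
    rw [tsum_eq_sum (s := σ) (fun k hk => by simp [hterm k, hk])]
    simp [hterm, Finset.sum_ite_mem]
  rw [hsum]
  by_cases hσ : σ = ∅
  · simp [hσ, expec]
  · have h1 : 1 ≤ σ.card := Finset.card_pos.mpr (Finset.nonempty_iff_ne_empty.mpr hσ)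
    have : F σ - expec F σ = F σ := by simp [expec, hσ]
    rw [this, nsmul_eq_mul]
    exact le_mul_of_one_le_left zero_le (by exact_mod_cast h1)
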